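/- Let A, B, C be positive semidefinite d×d matrices with A = B + C and B positive definite. Then for every nonzero vector x, (xᵀAx)/(xᵀBx) ≤ det(A)/det(B). -/

import Mathlib

open Matrix

theorem quad_form_ratio_le_det_ratio (d : ℕ)
    (A B C : Matrix (Fin d) (Fin d) ℝ)
    (hA : A.PosSemidef) (hB : B.PosDef) (hC : C.PosSemidef)
    (hABC : A = B + C) :
    ∀ x : Fin d → ℝ, x ≠ 0 →
      (x ⬝ᵥ A *ᵥ x) / (x ⬝ᵥ B *ᵥ x) ≤ A.det / B.det := by
  intro x hx
  set S : Matrix (Fin d) (Fin d) ℝ := (open scoped MatrixOrder in CFC.sqrt B) with hSdef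
  have hS : S.PosSemidef := by
    open scoped MatrixOrder in exact nonneg_iff_posSemidef.mp (CFC.sqrt_nonneg B)
  have hSS : S * S = B := by
    open scoped MatrixOrder in
    exact CFC.sqrt_mul_sqrt_self B (nonneg_iff_posSemidef.mpr hB.posSemidef)
  have hdetB : 0 < B.det := hB.det_pos
  have hdetS : S.det ≠ 0 := by
    intro h
    rw [← hSS, det_mul, h, mul_zero] at hdetB
    exact lt_irrefl _ hdetB
  have hSinv : S * S⁻¹ = 1 := mul_nonsing_inv S (isUnit_iff_ne_zero.mpr hdetS)
  have hSinv' : S⁻¹ * S = 1 := nonsing_inv_mul S (isUnit_iff_ne_zero.mpr hdetS)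
  have hSinvH : (S⁻¹)ᴴ = S⁻¹ := by rw [conjTranspose_nonsing_inv, hS.1]
  set M : Matrix (Fin d) (Fin d) ℝ := S⁻¹ * A * S⁻¹ with hMdef
  have hM : M.PosSemidef := by
    have := hA.conjTranspose_mul_mul_same S⁻¹
    rwa [hSinvH] at this
  have hSMS : S * M * S = A := by
    rw [hMdef]
    calc S * (S⁻¹ * A * S⁻¹) * S = (S * S⁻¹) * A * (S⁻¹ * S) := by
          simp only [Matrix.mul_assoc]
      _ = A := by rw [hSinv, hSinv', Matrix.one_mul, Matrix.mul_one]
  clear_value M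
  have hdetM : M.det * B.det = A.det := by
    have h := congrArg det hSMS
    rw [det_mul, det_mul] at h
    rw [← hSS, det_mul, ← h]; ring
  -- M - 1 is PSD
  have hM1 : (M - 1).PosSemidef := by
    have h1 : S⁻¹ * B * S⁻¹ = 1 := by
      rw [← hSS]
      calc S⁻¹ * (S * S) * S⁻¹ = (S⁻¹ * S) * (S * S⁻¹) := by
            simp only [Matrix.mul_assoc]
        _ = 1 := by rw [hSinv, hSinv', Matrix.one_mul]
    have h2 : M - 1 = S⁻¹ * C * S⁻¹ := by
      rw [hMdef, hABC, Matrix.mul_add, Matrix.add_mul, h1, add_sub_cancel_left]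
    rw [h2]
    have := hC.conjTranspose_mul_mul_same S⁻¹
    rwa [hSinvH] at this
  -- eigenvalues of M are ≥ 1
  have heig : ∀ i, 1 ≤ hM.1.eigenvalues i := by
    intro i
    set v : Fin d → ℝ := ⇑(hM.1.eigenvectorBasis i) with hv
    have hnorm : ‖hM.1.eigenvectorBasis i‖ = 1 := hM.1.eigenvectorBasis.orthonormal.1 i
    have hvv : v ⬝ᵥ v = 1 := by
      have h3 := EuclideanSpace.norm_eq (hM.1.eigenvectorBasis i)
      rw [hnorm] at h3
      have h4 : ∑ j, ‖(hM.1.eigenvectorBasis i) j‖ ^ 2 = 1 := Real.sqrt_eq_one.mp h3.symm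
      calc v ⬝ᵥ v = ∑ j, v j * v j := rfl
        _ = ∑ j, ‖(hM.1.eigenvectorBasis i) j‖ ^ 2 := by
            refine Finset.sum_congr rfl fun j _ => ?_
            rw [Real.norm_eq_abs, sq_abs, sq]
        _ = 1 := h4
    have hval : hM.1.eigenvalues i = v ⬝ᵥ (M *ᵥ v) := by
      have := hM.1.eigenvalues_eq i
      simpa [star, hv] using this
    have hpos := hM1.dotProduct_mulVec_nonneg v
    have hstar : star v = v := by simp
    rw [hstar, Matrix.sub_mulVec, dotProduct_sub, Matrix.one_mulVec, hvv] at hpos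
    linarith [hpos, hval.ge, hval.le]
  -- det M • 1 - M is PSD
  have hkey : (M.det • (1 : Matrix (Fin d) (Fin d) ℝ) - M).PosSemidef := by
    have hdet_eig : M.det = ∏ i, hM.1.eigenvalues i := by
      have := hM.1.det_eq_prod_eigenvalues
      simpa using this
    have hle : ∀ i, hM.1.eigenvalues i ≤ M.det := by
      intro i
      have hprod : (1 : ℝ) ≤ ∏ j ∈ Finset.univ.erase i, hM.1.eigenvalues j := by
        calc (1 : ℝ) = ∏ _j ∈ Finset.univ.erase i, (1 : ℝ) := by simp
          _ ≤ ∏ j ∈ Finset.univ.erase i, hM.1.eigenvalues j :=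
              Finset.prod_le_prod (fun _ _ => zero_le_one) (fun j _ => heig j)
      rw [hdet_eig, ← Finset.mul_prod_erase Finset.univ _ (Finset.mem_univ i)]
      nlinarith [heig i]
    have hspec := hM.1.spectral_theorem
    set U : Matrix (Fin d) (Fin d) ℝ := (hM.1.eigenvectorUnitary : Matrix (Fin d) (Fin d) ℝ) with hU
    have hUU : U * star U = 1 := by
      exact_mod_cast Matrix.mem_unitaryGroup_iff.mp hM.1.eigenvectorUnitary.2
    have hDcoe : (diagonal (RCLike.ofReal ∘ hM.1.eigenvalues) : Matrix (Fin d) (Fin d) ℝ)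
        = diagonal hM.1.eigenvalues := by
      congr 1
    have hrw : M.det • (1 : Matrix (Fin d) (Fin d) ℝ) - M
        = U * diagonal (fun i => M.det - hM.1.eigenvalues i) * star U := by
      have h5 : (diagonal (fun i => M.det - hM.1.eigenvalues i) : Matrix (Fin d) (Fin d) ℝ)
          = M.det • 1 - diagonal hM.1.eigenvalues := by
        ext i j
        by_cases h : i = j <;> simp [diagonal, Matrix.smul_apply, Matrix.one_apply, h]
      rw [h5, Matrix.mul_sub, Matrix.sub_mul, Matrix.mul_smul, Matrix.mul_one,
        Matrix.smul_mul, hUU, ← hDcoe]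
      exact congrArg (fun X => M.det • 1 - X) hspec
    rw [hrw]
    have hdiag : (diagonal (fun i => M.det - hM.1.eigenvalues i)).PosSemidef :=
      posSemidef_diagonal_iff.mpr fun i => sub_nonneg.mpr (hle i)
    have := hdiag.mul_mul_conjTranspose_same U
    simpa [Matrix.star_eq_conjTranspose] using this
  -- transfer back: det M • B - A is PSD
  have hfin : (M.det • B - A).PosSemidef := by
    have hrw : M.det • B - A = S * (M.det • (1 : Matrix (Fin d) (Fin d) ℝ) - M) * S := by
      rw [Matrix.mul_sub, Matrix.sub_mul, hSMS, Matrix.mul_smul, Matrix.smul_mul,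
        Matrix.mul_one, hSS]
    rw [hrw]
    have := hkey.mul_mul_conjTranspose_same S
    rwa [hS.1] at this
  have hBx : 0 < x ⬝ᵥ B *ᵥ x := by
    have := hB.dotProduct_mulVec_pos hx
    simpa using this
  have hAx : x ⬝ᵥ A *ᵥ x ≤ M.det * (x ⬝ᵥ B *ᵥ x) := by
    have := hfin.dotProduct_mulVec_nonneg x
    have hstar : star x = x := by simp
    rw [hstar, Matrix.sub_mulVec, dotProduct_sub, Matrix.smul_mulVec,
      dotProduct_smul] at this
    simpa [sub_nonneg] using this
  rw [div_le_div_iff₀ hBx hdetB]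
  nlinarith [hdetM, hAx, hBx]
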